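/- arXiv:1311.5186 — 5 statements merged into one kernel-verified Lean document; each statement's English description precedes it below -/
import Mathlib

section
/- Let X and Y be discrete random variables on finite sets, with X uniform on its domain 𝒜 and Y taking values in ℬ. Then there exists a function f : ℬ → {0,1} such that the mutual information satisfies I(X; f(Y)) ≥ I(X;Y) / |ℬ|. -/
open Finset

/-- Shannon entropy (base 2) of a finitely supported probability vector. -/
noncomputable def entH {ι : Type*} [Fintype ι] (p : ι → ℝ) : ℝ :=
  ∑ i, -(p i * Real.logb 2 (p i))

/-- Mutual information `I(X;Y) = H(X) + H(Y) - H(X,Y)` of a joint probability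
mass function `p` on `A × B`. -/
noncomputable def mutInfo {A B : Type*} [Fintype A] [Fintype B] (p : A × B → ℝ) : ℝ :=
  entH (fun a => ∑ b, p (a, b)) + entH (fun b => ∑ a, p (a, b)) - entH p

noncomputable def gg (x : ℝ) : ℝ := -(x * Real.logb 2 x)

lemma entH_eq {ι : Type*} [Fintype ι] (p : ι → ℝ) : entH p = ∑ i, gg (p i) := rfl

lemma gg_zero : gg 0 = 0 := by simp [gg]

lemma term_le (s t n : ℝ) (hs : 0 ≤ s) (ht : 0 < t) (hn : 0 < n) :
    gg s ≤ (t / n - s) / Real.log 2 + s * (Real.logb 2 n - Real.logb 2 t) := by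
  have l2 : (0:ℝ) < Real.log 2 := Real.log_pos one_lt_two
  rcases eq_or_lt_of_le hs with h | h
  · rw [← h, gg_zero]
    have : (0:ℝ) ≤ (t / n) / Real.log 2 := by positivity
    simpa using this
  · have hns : 0 < n * s := mul_pos hn h
    have key : Real.log (t / (n * s)) ≤ t / (n * s) - 1 :=
      Real.log_le_sub_one_of_pos (by positivity)
    have e1 : gg s - s * (Real.logb 2 n - Real.logb 2 t)
        = s * (Real.log (t / (n * s)) / Real.log 2) := by
      rw [Real.log_div ht.ne' hns.ne', Real.log_mul hn.ne' h.ne']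
      unfold gg
      simp only [Real.logb]
      ring
    have e2 : (t / n - s) / Real.log 2 = s * ((t / (n * s) - 1) / Real.log 2) := by
      field_simp
    have h2 : s * (Real.log (t / (n * s)) / Real.log 2)
        ≤ s * ((t / (n * s) - 1) / Real.log 2) := by
      gcongr
    linarith [e1, e2, h2]

lemma sumg_le {ι : Type*} [Fintype ι] (s : ι → ℝ) (hs : ∀ i, 0 ≤ s i) :
    ∑ i, gg (s i) ≤ gg (∑ i, s i) + (∑ i, s i) * Real.logb 2 (Fintype.card ι) := by
  set t := ∑ i, s i with hT
  have htnn : 0 ≤ t := Finset.sum_nonneg fun i _ => hs i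
  rcases eq_or_lt_of_le htnn with h0 | ht
  · have hz : ∀ i ∈ (univ : Finset ι), s i = 0 :=
      (Finset.sum_eq_zero_iff_of_nonneg fun i _ => hs i).mp h0.symm
    have : ∑ i, gg (s i) = 0 := by
      apply Finset.sum_eq_zero
      intro i hi
      rw [hz i hi, gg_zero]
    rw [this, ← h0, gg_zero]
    simp
  · have hne : (univ : Finset ι).Nonempty := by
      rcases Finset.eq_empty_or_nonempty (univ : Finset ι) with h | h
      · exfalso; rw [hT, h] at ht; simp at ht
      · exact h
    have hcard : 0 < Fintype.card ι := Fintype.card_pos_iff.mpr ⟨hne.choose⟩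
    have hn : 0 < (Fintype.card ι : ℝ) := by exact_mod_cast hcard
    have step : ∑ i, gg (s i)
        ≤ ∑ i, ((t / (Fintype.card ι : ℝ) - s i) / Real.log 2
            + s i * (Real.logb 2 (Fintype.card ι) - Real.logb 2 t)) :=
      Finset.sum_le_sum fun i _ => term_le (s i) t _ (hs i) ht hn
    have comp : ∑ i, ((t / (Fintype.card ι : ℝ) - s i) / Real.log 2
            + s i * (Real.logb 2 (Fintype.card ι) - Real.logb 2 t))
        = gg t + t * Real.logb 2 (Fintype.card ι) := by
      rw [Finset.sum_add_distrib, ← Finset.sum_mul, ← Finset.sum_div,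
        Finset.sum_sub_distrib, Finset.sum_const, Finset.card_univ, ← hT]
      have : (Fintype.card ι) • (t / (Fintype.card ι : ℝ)) = t := by
        rw [nsmul_eq_mul]
        field_simp
      rw [this]
      unfold gg
      ring
    linarith [step, comp.le, comp.ge]

/-- If `X` is uniform on its (finite) domain `A` and `Y` takes values in the finite
set `B`, there is `f : B → {0,1}` with `I(X; f(Y)) ≥ I(X;Y)/|B|`. -/
theorem stmt0 {A B : Type*} [Fintype A] [Fintype B] [Nonempty A] [Nonempty B]
    [DecidableEq B]
    (p : A × B → ℝ) (hnn : ∀ x, 0 ≤ p x) (hsum : ∑ x, p x = 1)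
    (hunif : ∀ a : A, ∑ b, p (a, b) = 1 / Fintype.card A) :
    ∃ f : B → Bool,
      mutInfo p / Fintype.card B ≤
        mutInfo (fun ac : A × Bool => ∑ b ∈ univ.filter (fun b => f b = ac.2), p (ac.1, b)) := by
  classical
  set n : ℝ := (Fintype.card A : ℝ) with hn_def
  have hnA : 0 < (Fintype.card A) := Fintype.card_pos
  have hn : 0 < n := by rw [hn_def]; exact_mod_cast hnA
  set L : ℝ := Real.logb 2 n with hL_def
  set Q : B → ℝ := fun b => ∑ a, p (a, b) with hQ_def
  have hQnn : ∀ b, 0 ≤ Q b := fun b => Finset.sum_nonneg fun a _ => hnn _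
  have hQsum : ∑ b, Q b = 1 := by
    rw [hQ_def]
    rw [← hsum, Fintype.sum_prod_type, Finset.sum_comm]
  have hrow : ∀ a b, p (a, b) ≤ 1 / n := by
    intro a b
    calc p (a, b) ≤ ∑ b', p (a, b') :=
          Finset.single_le_sum (fun b' _ => hnn _) (mem_univ b)
      _ = 1 / n := hunif a
  -- entropy of uniform on A
  have hunifEnt : ∀ (h : A → ℝ), (∀ a, h a = 1 / n) → entH h = L := by
    intro h hh
    rw [entH_eq]
    have : ∀ a ∈ (univ : Finset A), gg (h a) = (1/n) * L := by
      intro a _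
      rw [hh a]
      unfold gg
      rw [one_div, Real.logb_inv]
      ring
    rw [Finset.sum_congr rfl this, Finset.sum_const, Finset.card_univ, nsmul_eq_mul]
    rw [hn_def]
    field_simp
  -- key per-b lower bound
  have key : ∀ b₀ : B,
      Q b₀ * L + gg (Q b₀) - ∑ a, gg (p (a, b₀)) ≤
      mutInfo (fun ac : A × Bool =>
        ∑ b ∈ univ.filter (fun b => (decide (b = b₀)) = ac.2), p (ac.1, b)) := by
    intro b₀
    set r : A × Bool → ℝ := fun ac =>
      ∑ b ∈ univ.filter (fun b => (decide (b = b₀)) = ac.2), p (ac.1, b) with hr_def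
    have htrue : ∀ a, r (a, true) = p (a, b₀) := by
      intro a
      rw [hr_def]
      simp [Finset.filter_eq']
    have hfalse : ∀ a, r (a, false) = 1 / n - p (a, b₀) := by
      intro a
      rw [hr_def]
      simp only
      have hfilter : (univ.filter (fun b => (decide (b = b₀)) = false))
          = univ.filter (fun b => ¬ (b = b₀)) := by
        apply Finset.filter_congr
        intro b _
        simp
      rw [hfilter]
      have := Finset.sum_filter_add_sum_filter_not (univ : Finset B)
        (fun b => b = b₀) (fun b => p (a, b))
      have h1 : ∑ b ∈ univ.filter (fun b => b = b₀), p (a, b) = p (a, b₀) := by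
        simp [Finset.filter_eq']
      have h2 : ∑ b, p (a, b) = 1 / n := hunif a
      linarith
    -- marginals of r
    have hAmarg : ∀ a, ∑ c : Bool, r (a, c) = 1 / n := by
      intro a
      rw [Fintype.sum_bool, htrue, hfalse]
      ring
    have hBtrue : ∑ a, r (a, true) = Q b₀ := by
      rw [hQ_def]
      exact Finset.sum_congr rfl fun a _ => htrue a
    have hBfalse : ∑ a, r (a, false) = 1 - Q b₀ := by
      have : ∑ a, r (a, false) = ∑ a, (1 / n - p (a, b₀)) :=
        Finset.sum_congr rfl fun a _ => hfalse a
      rw [this, Finset.sum_sub_distrib, Finset.sum_const, Finset.card_univ, nsmul_eq_mul,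
        hQ_def]
      have : (Fintype.card A : ℝ) * (1 / n) = 1 := by rw [hn_def]; field_simp
      rw [this]
    have hEnt1 : entH (fun a => ∑ c : Bool, r (a, c)) = L :=
      hunifEnt _ hAmarg
    have hEnt2 : entH (fun c : Bool => ∑ a, r (a, c)) = gg (Q b₀) + gg (1 - Q b₀) := by
      rw [entH_eq, Fintype.sum_bool, hBtrue, hBfalse]
    have hEnt3 : entH r = ∑ a, gg (p (a, b₀)) + ∑ a, gg (1 / n - p (a, b₀)) := by
      rw [entH_eq, Fintype.sum_prod_type]
      have : ∀ a ∈ (univ : Finset A),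
          ∑ c : Bool, gg (r (a, c)) = gg (p (a, b₀)) + gg (1 / n - p (a, b₀)) := by
        intro a _
        rw [Fintype.sum_bool, htrue, hfalse]
      rw [Finset.sum_congr rfl this, Finset.sum_add_distrib]
    have hmut : mutInfo r = L + (gg (Q b₀) + gg (1 - Q b₀))
        - (∑ a, gg (p (a, b₀)) + ∑ a, gg (1 / n - p (a, b₀))) := by
      unfold mutInfo
      rw [← hEnt3, ← hEnt2, ← hEnt1]
    -- core inequality applied to the "false" column
    have hcore : ∑ a, gg (1 / n - p (a, b₀)) ≤ gg (1 - Q b₀) + (1 - Q b₀) * L := by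
      have hs : ∀ a, 0 ≤ 1 / n - p (a, b₀) := fun a => by linarith [hrow a b₀]
      have := sumg_le (fun a => 1 / n - p (a, b₀)) hs
      have hsum' : ∑ a, (1 / n - p (a, b₀)) = 1 - Q b₀ := by
        rw [Finset.sum_sub_distrib, Finset.sum_const, Finset.card_univ, nsmul_eq_mul, hQ_def]
        have : (Fintype.card A : ℝ) * (1 / n) = 1 := by rw [hn_def]; field_simp
        rw [this]
      rw [hsum'] at this
      calc ∑ a, gg (1 / n - p (a, b₀)) ≤ gg (1 - Q b₀) + (1 - Q b₀) * Real.logb 2 (Fintype.card A) := this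
        _ = gg (1 - Q b₀) + (1 - Q b₀) * L := by rw [hL_def, hn_def]
    rw [hmut]
    linarith
  -- sum of lower bounds equals mutInfo p
  have hsum_lb : ∑ b, (Q b * L + gg (Q b) - ∑ a, gg (p (a, b))) = mutInfo p := by
    have e1 : entH (fun a => ∑ b, p (a, b)) = L := hunifEnt _ hunif
    have e2 : entH (fun b => ∑ a, p (a, b)) = ∑ b, gg (Q b) := by
      rw [entH_eq]
    have e3 : entH p = ∑ b, ∑ a, gg (p (a, b)) := by
      rw [entH_eq, Fintype.sum_prod_type, Finset.sum_comm]
    unfold mutInfo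
    rw [e1, e2, e3]
    rw [Finset.sum_sub_distrib, Finset.sum_add_distrib, ← Finset.sum_mul, hQsum, one_mul]
  -- averaging
  have hBcard : 0 < (Fintype.card B : ℝ) := by
    exact_mod_cast (Fintype.card_pos : 0 < Fintype.card B)
  have havg : ∑ b : B, mutInfo p / (Fintype.card B : ℝ)
      ≤ ∑ b, (Q b * L + gg (Q b) - ∑ a, gg (p (a, b))) := by
    rw [hsum_lb, Finset.sum_const, Finset.card_univ, nsmul_eq_mul]
    rw [mul_div_cancel₀ _ hBcard.ne']
  obtain ⟨b₀, _, hb₀⟩ := Finset.exists_le_of_sum_le (univ_nonempty) havg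
  refine ⟨fun b => decide (b = b₀), ?_⟩
  exact le_trans hb₀ (key b₀)
end

section
/- Let q be a prime, ω a primitive q-th root of unity in ℂ, and let (u_x)_{x∈𝔽_q} and (v_y)_{y∈𝔽_q} be unit vectors in ℂ^n. Then |∑_{x,y∈𝔽_q} ω^{−xy} ⟨u_x, v_y⟩| ≤ q^{3/2}. -/
open Finset
open scoped InnerProductSpace

/-- For `q` prime, `ω = e^{2πi/q}` and unit vectors `u_x, v_y ∈ ℂⁿ`,
`|∑_{x,y∈𝔽_q} ω^{-xy} ⟨u_x, v_y⟩| ≤ q^{3/2}`. -/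
theorem stmt1 (q n : ℕ) [NeZero q] (hq : q.Prime) (u v : ZMod q → EuclideanSpace ℂ (Fin n))
    (hu : ∀ x, ‖u x‖ = 1) (hv : ∀ y, ‖v y‖ = 1) :
    ‖(∑ x : ZMod q, ∑ y : ZMod q,
        Complex.exp (2 * Real.pi * Complex.I / q) ^ (-(((x * y : ZMod q)).val : ℤ)) *
          ⟪u x, v y⟫_ℂ)‖ ≤ (q : ℝ) ^ ((3 : ℝ) / 2) := by
  have hq0 : q ≠ 0 := NeZero.ne q
  set ζ : ℂ := Complex.exp (2 * Real.pi * Complex.I / q) with hζdef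
  have hprim : IsPrimitiveRoot ζ q := by
    exact Complex.isPrimitiveRoot_exp q hq0
  set η : ℂ := ζ⁻¹ with hηdef
  have hprim' : IsPrimitiveRoot η q := hprim.inv
  have hη1 : η ^ q = 1 := hprim'.pow_eq_one
  set e : ZMod q → ℂ := fun a => η ^ a.val with he
  have hcoef : ∀ a : ZMod q, ζ ^ (-(a.val : ℤ)) = e a := by
    intro a; rw [zpow_neg, zpow_natCast, ← inv_pow]
  have he_add : ∀ a b : ZMod q, e (a + b) = e a * e b := by
    intro a b
    simp only [he]
    rw [ZMod.val_add, ← pow_eq_pow_mod _ hη1, pow_add]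
  have he0 : e 0 = 1 := by simp [he]
  have habs : ∀ a, ‖e a‖ = 1 := by
    intro a
    have h1 : ‖η‖ = 1 :=
      Complex.norm_eq_one_of_pow_eq_one hη1 hq0
    simp [he, norm_pow, h1]
  have hconj : ∀ a, (starRingEnd ℂ) (e a) = e (-a) := by
    intro a
    have h1 : e a * e (-a) = 1 := by rw [← he_add]; simp [he0]
    have h2 : (e a)⁻¹ = (starRingEnd ℂ) (e a) := by
      apply Complex.inv_eq_conj
      simpa using habs a
    rw [← h2]
    exact inv_eq_of_mul_eq_one_right h1
  have horth : ∀ c : ZMod q, ∑ x : ZMod q, e (x * c) = if c = 0 then (q : ℂ) else 0 := by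
    intro c
    by_cases hc : c = 0
    · simp [hc, he0, Finset.card_univ, ZMod.card]
    · rw [if_neg hc]
      have key : e c * ∑ x : ZMod q, e (x * c) = ∑ x : ZMod q, e (x * c) := by
        rw [Finset.mul_sum]
        refine Fintype.sum_equiv (Equiv.addRight (1 : ZMod q)) _ _ fun x => ?_
        rw [← he_add]
        congr 1
        simp [Equiv.coe_addRight]
        ring
      have hec : e c ≠ 1 := by
        simp only [he]
        intro h
        have hdvd := (hprim'.pow_eq_one_iff_dvd c.val).mp h
        have hlt := ZMod.val_lt c
        have hne : c.val ≠ 0 := by simpa [ZMod.val_eq_zero] using hc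
        have := Nat.le_of_dvd (Nat.pos_of_ne_zero hne) hdvd
        omega
      have hz : (e c - 1) * ∑ x : ZMod q, e (x * c) = 0 := by
        rw [sub_mul, one_mul, key, sub_self]
      exact (mul_eq_zero.mp hz).resolve_left (sub_ne_zero.mpr hec)
  set w : ZMod q → EuclideanSpace ℂ (Fin n) := fun x => ∑ y : ZMod q, e (x * y) • v y with hw
  have hS : (∑ x : ZMod q, ∑ y : ZMod q, ζ ^ (-(((x * y : ZMod q)).val : ℤ)) * ⟪u x, v y⟫_ℂ)
      = ∑ x : ZMod q, ⟪u x, w x⟫_ℂ := by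
    refine Finset.sum_congr rfl fun x _ => ?_
    rw [hw, inner_sum]
    refine Finset.sum_congr rfl fun y _ => ?_
    rw [inner_smul_right, hcoef]
  -- key computation: ∑ ‖w x‖^2 = q^2
  have hww : (∑ x : ZMod q, (‖w x‖ : ℝ) ^ 2) = (q : ℝ) ^ 2 := by
    have hC : (∑ x : ZMod q, (⟪w x, w x⟫_ℂ)) = (q : ℂ) ^ 2 := by
      have step : ∀ x : ZMod q, ⟪w x, w x⟫_ℂ
          = ∑ y : ZMod q, ∑ y' : ZMod q, e (x * (y' - y)) * ⟪v y, v y'⟫_ℂ := by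
        intro x
        rw [hw, sum_inner]
        refine Finset.sum_congr rfl fun y _ => ?_
        rw [inner_smul_left, inner_sum, Finset.mul_sum]
        refine Finset.sum_congr rfl fun y' _ => ?_
        rw [inner_smul_right, hconj, ← mul_assoc, ← he_add]
        congr 2
        ring
      calc (∑ x : ZMod q, (⟪w x, w x⟫_ℂ))
          = ∑ y : ZMod q, ∑ y' : ZMod q, (∑ x : ZMod q, e (x * (y' - y))) * ⟪v y, v y'⟫_ℂ := by
            simp only [step]
            rw [Finset.sum_comm]
            refine Finset.sum_congr rfl fun y _ => ?_
            rw [Finset.sum_comm]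
            refine Finset.sum_congr rfl fun y' _ => ?_
            rw [Finset.sum_mul]
        _ = ∑ y : ZMod q, (q : ℂ) * ⟪v y, v y⟫_ℂ := by
            refine Finset.sum_congr rfl fun y _ => ?_
            rw [Finset.sum_eq_single y]
            · rw [horth, if_pos (sub_self y)]
            · intro y' _ hne
              rw [horth, if_neg (sub_ne_zero.mpr hne), zero_mul]
            · intro h; exact absurd (Finset.mem_univ y) h
        _ = (q : ℂ) ^ 2 := by
            have : ∀ y : ZMod q, ⟪v y, v y⟫_ℂ = 1 := by
              intro y
              rw [inner_self_eq_norm_sq_to_K, hv]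
              norm_num
            simp only [this, mul_one, Finset.sum_const, Finset.card_univ, ZMod.card, nsmul_eq_mul]
            ring
    have : ((∑ x : ZMod q, (‖w x‖ : ℝ) ^ 2 : ℝ) : ℂ) = ((q : ℝ) ^ 2 : ℝ) := by
      push_cast
      rw [← hC]
      refine Finset.sum_congr rfl fun x _ => ?_
      rw [inner_self_eq_norm_sq_to_K]
      norm_cast
    exact_mod_cast this
  -- chain of inequalities
  rw [hS]
  calc ‖∑ x : ZMod q, ⟪u x, w x⟫_ℂ‖
      ≤ ∑ x : ZMod q, ‖⟪u x, w x⟫_ℂ‖ := norm_sum_le _ _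
    _ ≤ ∑ x : ZMod q, ‖w x‖ := by
        refine Finset.sum_le_sum fun x _ => ?_
        have := norm_inner_le_norm (𝕜 := ℂ) (u x) (w x)
        rwa [hu, one_mul] at this
    _ ≤ (q : ℝ) ^ ((3 : ℝ) / 2) := by
        have hcs : (∑ x : ZMod q, ‖w x‖) ^ 2 ≤ (q : ℝ) * ∑ x : ZMod q, ‖w x‖ ^ 2 := by
          have := sq_sum_le_card_mul_sum_sq (s := (univ : Finset (ZMod q))) (f := fun x => ‖w x‖)
          simpa [Finset.card_univ, ZMod.card] using this
        rw [hww] at hcs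
        have hnonneg : (0 : ℝ) ≤ ∑ x : ZMod q, ‖w x‖ :=
          Finset.sum_nonneg fun x _ => norm_nonneg _
        have h3 : ((q : ℝ) ^ ((3 : ℝ) / 2)) ^ 2 = (q : ℝ) * (q : ℝ) ^ 2 := by
          rw [← Real.rpow_natCast ((q : ℝ) ^ ((3:ℝ)/2)) 2,
            ← Real.rpow_mul (Nat.cast_nonneg q)]
          norm_num
          ring
        rw [← h3] at hcs
        have hpos : (0 : ℝ) ≤ (q : ℝ) ^ ((3 : ℝ) / 2) := by positivity
        nlinarith [hcs, hnonneg, hpos]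
end

section
/- Let p be a prime and q = p sufficiently large. Let P = {(x,y) ∈ 𝔽_q² : x is represented by an integer in [0, ⌊q^{1/3}⌋), y by an integer in [0, ⌊q^{2/3}⌋)} and L the set of lines y = cx + d with c represented in [0, ⌊q^{1/3}⌋/2) and d in [0, ⌊q^{2/3}⌋/2). Then |P| ≤ q, |L| ≤ q, and the number of incidences between P and L is Θ(q^{4/3}): in particular for every line ℓ ∈ L, every x-coordinate in [0, ⌊q^{1/3}⌋) gives a point of P on ℓ, so |I(P,L)| ≥ |L| · ⌊q^{1/3}⌋ = Ω(q^{4/3}). -/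
lemma card_val_lt (p n : ℕ) [NeZero p] (h : n ≤ p) :
    (Finset.univ.filter fun x : ZMod p => x.val < n).card = n := by
  rw [← Finset.card_range n]
  apply Finset.card_bij (fun x _ => ZMod.val x)
  · intro x hx; simpa using (Finset.mem_filter.mp hx).2
  · intro x _ y _ h; exact ZMod.val_injective p h
  · intro m hm
    simp only [Finset.mem_range] at hm
    exact ⟨(m : ZMod p), by simp [ZMod.val_cast_of_lt (lt_of_lt_of_le hm h), hm],
      ZMod.val_cast_of_lt (lt_of_lt_of_le hm h)⟩


lemma aux_lower (p a b : ℕ) (x y : ℝ) (hx0 : 0 ≤ x) (hcube : x ^ 3 = p) (hsq : x ^ 2 = y)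
    (hyy : y * y = (p:ℝ) ^ ((4:ℝ)/3)) (hp100 : (100:ℝ) ≤ p)
    (hA : x - 1 ≤ (a:ℝ)) (hB : y - 1 ≤ (b:ℝ)) :
    1/32 * (p:ℝ) ^ ((4:ℝ)/3) ≤ ((a/2 * (b/2) * a : ℕ) : ℝ) := by
  have hx4 : (4:ℝ) ≤ x := by nlinarith [sq_nonneg x, sq_nonneg (x - 4)]
  have hy0 : 0 ≤ y := by nlinarith [sq_nonneg x]
  have hy4 : (4:ℝ) ≤ y := by nlinarith
  have hA2' : a ≤ 2 * (a/2) + 1 := by omega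
  have hB2' : b ≤ 2 * (b/2) + 1 := by omega
  have hA2 : ((a:ℝ) - 1)/2 ≤ ((a/2 : ℕ) : ℝ) := by
    have : (a:ℝ) ≤ 2 * ((a/2 : ℕ) : ℝ) + 1 := by exact_mod_cast hA2'
    linarith
  have hB2 : ((b:ℝ) - 1)/2 ≤ ((b/2 : ℕ) : ℝ) := by
    have : (b:ℝ) ≤ 2 * ((b/2 : ℕ) : ℝ) + 1 := by exact_mod_cast hB2'
    linarith
  have e1 : x/4 ≤ ((a/2 : ℕ) : ℝ) := by linarith
  have e2 : y/4 ≤ ((b/2 : ℕ) : ℝ) := by linarith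
  have e3 : x/2 ≤ (a:ℝ) := by linarith
  have eprod : x/4 * (y/4) * (x/2) ≤ ((a/2 : ℕ) : ℝ) * ((b/2 : ℕ) : ℝ) * (a:ℝ) := by
    have h12 : x/4 * (y/4) ≤ ((a/2 : ℕ) : ℝ) * ((b/2 : ℕ) : ℝ) :=
      mul_le_mul e1 e2 (by positivity) (by positivity)
    exact mul_le_mul h12 e3 (by positivity) (by positivity)
  have eeq : x/4 * (y/4) * (x/2) = y * y / 32 := by linear_combination (y/32) * hsq
  push_cast
  calc 1/32 * (p:ℝ) ^ ((4:ℝ)/3) = y * y / 32 := by rw [hyy]; ring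
  _ = x/4 * (y/4) * (x/2) := eeq.symm
  _ ≤ ((a/2 : ℕ) : ℝ) * ((b/2 : ℕ) : ℝ) * (a:ℝ) := eprod

lemma aux_upper (p a b : ℕ) (x y : ℝ) (hax : (a:ℝ) ≤ x) (hby : (b:ℝ) ≤ y) (hx0 : 0 ≤ x)
    (hy0 : 0 ≤ y) (hsq : x ^ 2 = y) (hyy : y * y = (p:ℝ) ^ ((4:ℝ)/3)) :
    ((a * a * b : ℕ) : ℝ) ≤ 1 * (p:ℝ) ^ ((4:ℝ)/3) := by
  push_cast
  have h1 : (a:ℝ) * a ≤ x * x :=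
    mul_le_mul hax hax (Nat.cast_nonneg a) hx0
  have h2 : (a:ℝ) * a * b ≤ x * x * y :=
    mul_le_mul h1 hby (Nat.cast_nonneg b) (by positivity)
  have h3 : x * x * y = y * y := by linear_combination y * hsq
  linarith

theorem stmt6' :
    ∃ c C : ℝ, 0 < c ∧ ∃ N : ℕ, ∀ (p : ℕ) [NeZero p], p.Prime → N ≤ p →
      ((Finset.univ.filter fun z : ZMod p × ZMod p =>
          z.1.val < ⌊(p : ℝ) ^ ((1 : ℝ) / 3)⌋₊ ∧ z.2.val < ⌊(p : ℝ) ^ ((2 : ℝ) / 3)⌋₊).card ≤ p) ∧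
      ((Finset.univ.filter fun l : ZMod p × ZMod p =>
          l.1.val < ⌊(p : ℝ) ^ ((1 : ℝ) / 3)⌋₊ / 2 ∧
            l.2.val < ⌊(p : ℝ) ^ ((2 : ℝ) / 3)⌋₊ / 2).card ≤ p) ∧
      ((Finset.univ.filter fun l : ZMod p × ZMod p =>
          l.1.val < ⌊(p : ℝ) ^ ((1 : ℝ) / 3)⌋₊ / 2 ∧
            l.2.val < ⌊(p : ℝ) ^ ((2 : ℝ) / 3)⌋₊ / 2).card * ⌊(p : ℝ) ^ ((1 : ℝ) / 3)⌋₊ ≤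
        (Finset.univ.filter fun zl : (ZMod p × ZMod p) × (ZMod p × ZMod p) =>
          (zl.1.1.val < ⌊(p : ℝ) ^ ((1 : ℝ) / 3)⌋₊ ∧ zl.1.2.val < ⌊(p : ℝ) ^ ((2 : ℝ) / 3)⌋₊) ∧
          (zl.2.1.val < ⌊(p : ℝ) ^ ((1 : ℝ) / 3)⌋₊ / 2 ∧
            zl.2.2.val < ⌊(p : ℝ) ^ ((2 : ℝ) / 3)⌋₊ / 2) ∧
          zl.1.2 = zl.2.1 * zl.1.1 + zl.2.2).card) ∧
      (c * (p : ℝ) ^ ((4 : ℝ) / 3) ≤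
        ((Finset.univ.filter fun zl : (ZMod p × ZMod p) × (ZMod p × ZMod p) =>
          (zl.1.1.val < ⌊(p : ℝ) ^ ((1 : ℝ) / 3)⌋₊ ∧ zl.1.2.val < ⌊(p : ℝ) ^ ((2 : ℝ) / 3)⌋₊) ∧
          (zl.2.1.val < ⌊(p : ℝ) ^ ((1 : ℝ) / 3)⌋₊ / 2 ∧
            zl.2.2.val < ⌊(p : ℝ) ^ ((2 : ℝ) / 3)⌋₊ / 2) ∧
          zl.1.2 = zl.2.1 * zl.1.1 + zl.2.2).card : ℝ)) ∧
      (((Finset.univ.filter fun zl : (ZMod p × ZMod p) × (ZMod p × ZMod p) =>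
          (zl.1.1.val < ⌊(p : ℝ) ^ ((1 : ℝ) / 3)⌋₊ ∧ zl.1.2.val < ⌊(p : ℝ) ^ ((2 : ℝ) / 3)⌋₊) ∧
          (zl.2.1.val < ⌊(p : ℝ) ^ ((1 : ℝ) / 3)⌋₊ / 2 ∧
            zl.2.2.val < ⌊(p : ℝ) ^ ((2 : ℝ) / 3)⌋₊ / 2) ∧
          zl.1.2 = zl.2.1 * zl.1.1 + zl.2.2).card : ℝ) ≤ C * (p : ℝ) ^ ((4 : ℝ) / 3)) := by
  refine ⟨1/32, 1, by norm_num, 100, ?_⟩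
  intro p _ hp hN
  set a := ⌊(p : ℝ) ^ ((1 : ℝ) / 3)⌋₊ with hadef
  set b := ⌊(p : ℝ) ^ ((2 : ℝ) / 3)⌋₊ with hbdef
  have hp0 : (0:ℝ) < p := by exact_mod_cast hp.pos
  have hp1 : (1:ℝ) ≤ p := by exact_mod_cast hp.one_lt.le
  have hp100 : (100:ℝ) ≤ p := by exact_mod_cast hN
  set x := (p:ℝ) ^ ((1:ℝ)/3) with hxdef
  set y := (p:ℝ) ^ ((2:ℝ)/3) with hydef
  have hx0 : 0 ≤ x := Real.rpow_nonneg hp0.le _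
  have hy0 : 0 ≤ y := Real.rpow_nonneg hp0.le _
  have hxy : x * y = p := by rw [hxdef, hydef, ← Real.rpow_add hp0]; norm_num
  have hyy : y * y = (p:ℝ) ^ ((4:ℝ)/3) := by rw [hydef, ← Real.rpow_add hp0]; norm_num
  have hsq : x ^ 2 = y := by
    rw [hxdef, hydef, ← Real.rpow_natCast _ 2, ← Real.rpow_mul hp0.le]; norm_num
  have hcube : x ^ 3 = p := by
    rw [hxdef, ← Real.rpow_natCast _ 3, ← Real.rpow_mul hp0.le]; norm_num
  have hxp : x ≤ p := by
    calc x ≤ (p:ℝ) ^ (1:ℝ) := Real.rpow_le_rpow_of_exponent_le hp1 (by norm_num)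
    _ = p := Real.rpow_one _
  have hyp : y ≤ p := by
    calc y ≤ (p:ℝ) ^ (1:ℝ) := Real.rpow_le_rpow_of_exponent_le hp1 (by norm_num)
    _ = p := Real.rpow_one _
  have hax : (a:ℝ) ≤ x := Nat.floor_le hx0
  have hby : (b:ℝ) ≤ y := Nat.floor_le hy0
  have hA : x - 1 ≤ (a:ℝ) := (Nat.sub_one_lt_floor x).le
  have hB : y - 1 ≤ (b:ℝ) := (Nat.sub_one_lt_floor y).le
  clear_value x y
  have hap : a ≤ p := by exact_mod_cast hax.trans hxp
  have hbp : b ≤ p := by exact_mod_cast hby.trans hyp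
  have hab : a * a ≤ b := by
    apply Nat.le_floor; push_cast; nlinarith [hax, hx0, hsq]
  -- key value fact
  have key : ∀ cc dd xx : ZMod p, cc.val < a/2 → dd.val < b/2 → xx.val < a →
      (cc * xx + dd).val = cc.val * xx.val + dd.val ∧ cc.val * xx.val + dd.val < b := by
    intro cc dd xx hc hd hxv
    have h1 : cc.val * xx.val ≤ (a/2) * a := Nat.mul_le_mul hc.le hxv.le
    have h2 : (a/2) * a ≤ (a*a)/2 := by
      rw [Nat.le_div_iff_mul_le two_pos]
      calc a/2*a*2 = a/2*2*a := by ring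
      _ ≤ a*a := Nat.mul_le_mul_right a (Nat.div_mul_le_self a 2)
    have h3 : cc.val * xx.val ≤ b/2 := (h1.trans h2).trans (Nat.div_le_div_right hab)
    have h4 : cc.val * xx.val + dd.val < b := by omega
    have h5 : cc.val * xx.val + dd.val < p := h4.trans_le hbp
    refine ⟨?_, h4⟩
    rw [ZMod.val_add, ZMod.val_mul, Nat.mod_eq_of_lt (show cc.val * xx.val < p by omega),
      Nat.mod_eq_of_lt h5]
  -- card facts
  have hP : (Finset.univ.filter fun z : ZMod p × ZMod p =>
      z.1.val < a ∧ z.2.val < b).card = a * b := by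
    rw [← Finset.univ_product_univ,
      Finset.filter_product (fun u : ZMod p => u.val < a) (fun v : ZMod p => v.val < b),
      Finset.card_product, card_val_lt p a hap, card_val_lt p b hbp]
  have hL : (Finset.univ.filter fun l : ZMod p × ZMod p =>
      l.1.val < a/2 ∧ l.2.val < b/2).card = (a/2) * (b/2) := by
    rw [← Finset.univ_product_univ,
      Finset.filter_product (fun u : ZMod p => u.val < a/2) (fun v : ZMod p => v.val < b/2),
      Finset.card_product, card_val_lt p (a/2) ((Nat.div_le_self _ _).trans hap),
      card_val_lt p (b/2) ((Nat.div_le_self _ _).trans hbp)]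
  set X := Finset.univ.filter fun xx : ZMod p => xx.val < a with hXdef
  set Lf := Finset.univ.filter fun l : ZMod p × ZMod p =>
      l.1.val < a/2 ∧ l.2.val < b/2 with hLdef
  set If := Finset.univ.filter fun zl : (ZMod p × ZMod p) × (ZMod p × ZMod p) =>
      (zl.1.1.val < a ∧ zl.1.2.val < b) ∧
      (zl.2.1.val < a/2 ∧ zl.2.2.val < b/2) ∧
      zl.1.2 = zl.2.1 * zl.1.1 + zl.2.2 with hIdef
  have hXcard : X.card = a := card_val_lt p a hap
  -- lower bound on incidences
  have hIlow : Lf.card * a ≤ If.card := by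
    have hinj : (X ×ˢ Lf).card ≤ If.card := by
      apply Finset.card_le_card_of_injOn
        (fun q : ZMod p × (ZMod p × ZMod p) => ((q.1, q.2.1 * q.1 + q.2.2), q.2))
      · intro q hq
        simp only [Finset.mem_coe, Finset.mem_product, hXdef, hLdef, Finset.mem_filter, Finset.mem_univ,
          true_and] at hq
        obtain ⟨hq1, hq2, hq3⟩ := hq
        have hk := key q.2.1 q.2.2 q.1 hq2 hq3 hq1
        simp only [Finset.mem_coe, hIdef, Finset.mem_filter, Finset.mem_univ, true_and]
        refine ⟨⟨hq1, ?_⟩, ⟨hq2, hq3⟩, trivial⟩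
        rw [hk.1]; exact hk.2
      · intro q1 _ q2 _ heq
        simp only [Prod.mk.injEq] at heq
        exact Prod.ext heq.1.1 heq.2
    calc Lf.card * a = (X ×ˢ Lf).card := by
          rw [Finset.card_product, hXcard, mul_comm]
    _ ≤ If.card := hinj
  -- upper bound on incidences
  have hIhigh : If.card ≤ a * ((a/2) * (b/2)) := by
    have hinj : If.card ≤ (X ×ˢ Lf).card := by
      apply Finset.card_le_card_of_injOn (fun zl => (zl.1.1, zl.2))
      · intro zl hzl
        simp only [Finset.mem_coe, hIdef, Finset.mem_filter, Finset.mem_univ, true_and] at hzl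
        simp only [Finset.mem_coe, Finset.mem_product, hXdef, hLdef, Finset.mem_filter, Finset.mem_univ,
          true_and]
        exact ⟨hzl.1.1, hzl.2.1⟩
      · intro z1 h1 z2 h2 heq
        simp only [hIdef, Finset.coe_filter, Set.mem_setOf_eq, Finset.mem_univ, true_and] at h1 h2
        simp only [Prod.mk.injEq] at heq
        have hy2 : z1.1.2 = z2.1.2 := by rw [h1.2.2, h2.2.2, heq.1, heq.2]
        exact Prod.ext (Prod.ext heq.1 hy2) heq.2
    calc If.card ≤ (X ×ˢ Lf).card := hinj
    _ = a * ((a/2) * (b/2)) := by rw [Finset.card_product, hXcard, hL]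
  refine ⟨?_, ?_, ?_, ?_, ?_⟩
  · rw [hP]
    have : (a:ℝ) * b ≤ p := by nlinarith [hax, hby, hx0, hy0, hxy]
    exact_mod_cast this
  · rw [hL]
    have h1 : a/2 * (b/2) ≤ a * b := Nat.mul_le_mul (Nat.div_le_self a 2) (Nat.div_le_self b 2)
    have h2 : (a:ℝ) * b ≤ p := by nlinarith [hax, hby, hx0, hy0, hxy]
    have h3 : a * b ≤ p := by exact_mod_cast h2
    omega
  · exact hIlow
  · -- lower bound c * p^{4/3}
    have hreal := aux_lower p a b x y hx0 hcube hsq hyy hp100 hA hB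
    have hnat : (a/2) * (b/2) * a ≤ If.card := by rw [← hL]; exact hIlow
    calc 1/32 * (p:ℝ) ^ ((4:ℝ)/3) ≤ ((a/2 * (b/2) * a : ℕ) : ℝ) := hreal
    _ ≤ (If.card : ℝ) := by exact_mod_cast hnat
  · -- upper bound
    have h1 : If.card ≤ a * a * b := by
      calc If.card ≤ a * ((a/2) * (b/2)) := hIhigh
      _ ≤ a * (a * b) := Nat.mul_le_mul_left a
          (Nat.mul_le_mul (Nat.div_le_self a 2) (Nat.div_le_self b 2))
      _ = a * a * b := by ring
    calc (If.card : ℝ) ≤ ((a * a * b : ℕ) : ℝ) := by exact_mod_cast h1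
    _ ≤ 1 * (p:ℝ) ^ ((4:ℝ)/3) := aux_upper p a b x y hax hby hx0 hy0 hsq hyy

/-- For `q = p` a sufficiently large prime, the grid of points with coordinates in
`[0,⌊q^{1/3}⌋) × [0,⌊q^{2/3}⌋)` and the lines `y = cx + d` with `c ∈ [0,⌊q^{1/3}⌋/2)`,
`d ∈ [0,⌊q^{2/3}⌋/2)` satisfy `|P| ≤ q`, `|L| ≤ q`, every line of `L` meets `P` in at least
`⌊q^{1/3}⌋` points of `P` (so `|I(P,L)| ≥ |L|·⌊q^{1/3}⌋`), and `|I(P,L)| = Θ(q^{4/3})`. -/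
theorem stmt6 :
    ∃ c C : ℝ, 0 < c ∧ ∃ N : ℕ, ∀ (p : ℕ) [NeZero p], p.Prime → N ≤ p →
      ((Finset.univ.filter fun z : ZMod p × ZMod p =>
          z.1.val < ⌊(p : ℝ) ^ ((1 : ℝ) / 3)⌋₊ ∧ z.2.val < ⌊(p : ℝ) ^ ((2 : ℝ) / 3)⌋₊).card ≤ p) ∧
      ((Finset.univ.filter fun l : ZMod p × ZMod p =>
          l.1.val < ⌊(p : ℝ) ^ ((1 : ℝ) / 3)⌋₊ / 2 ∧
            l.2.val < ⌊(p : ℝ) ^ ((2 : ℝ) / 3)⌋₊ / 2).card ≤ p) ∧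
      ((Finset.univ.filter fun l : ZMod p × ZMod p =>
          l.1.val < ⌊(p : ℝ) ^ ((1 : ℝ) / 3)⌋₊ / 2 ∧
            l.2.val < ⌊(p : ℝ) ^ ((2 : ℝ) / 3)⌋₊ / 2).card * ⌊(p : ℝ) ^ ((1 : ℝ) / 3)⌋₊ ≤
        (Finset.univ.filter fun zl : (ZMod p × ZMod p) × (ZMod p × ZMod p) =>
          (zl.1.1.val < ⌊(p : ℝ) ^ ((1 : ℝ) / 3)⌋₊ ∧ zl.1.2.val < ⌊(p : ℝ) ^ ((2 : ℝ) / 3)⌋₊) ∧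
          (zl.2.1.val < ⌊(p : ℝ) ^ ((1 : ℝ) / 3)⌋₊ / 2 ∧
            zl.2.2.val < ⌊(p : ℝ) ^ ((2 : ℝ) / 3)⌋₊ / 2) ∧
          zl.1.2 = zl.2.1 * zl.1.1 + zl.2.2).card) ∧
      (c * (p : ℝ) ^ ((4 : ℝ) / 3) ≤
        ((Finset.univ.filter fun zl : (ZMod p × ZMod p) × (ZMod p × ZMod p) =>
          (zl.1.1.val < ⌊(p : ℝ) ^ ((1 : ℝ) / 3)⌋₊ ∧ zl.1.2.val < ⌊(p : ℝ) ^ ((2 : ℝ) / 3)⌋₊) ∧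
          (zl.2.1.val < ⌊(p : ℝ) ^ ((1 : ℝ) / 3)⌋₊ / 2 ∧
            zl.2.2.val < ⌊(p : ℝ) ^ ((2 : ℝ) / 3)⌋₊ / 2) ∧
          zl.1.2 = zl.2.1 * zl.1.1 + zl.2.2).card : ℝ)) ∧
      (((Finset.univ.filter fun zl : (ZMod p × ZMod p) × (ZMod p × ZMod p) =>
          (zl.1.1.val < ⌊(p : ℝ) ^ ((1 : ℝ) / 3)⌋₊ ∧ zl.1.2.val < ⌊(p : ℝ) ^ ((2 : ℝ) / 3)⌋₊) ∧
          (zl.2.1.val < ⌊(p : ℝ) ^ ((1 : ℝ) / 3)⌋₊ / 2 ∧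
            zl.2.2.val < ⌊(p : ℝ) ^ ((2 : ℝ) / 3)⌋₊ / 2) ∧
          zl.1.2 = zl.2.1 * zl.1.1 + zl.2.2).card : ℝ) ≤ C * (p : ℝ) ^ ((4 : ℝ) / 3)) :=
  stmt6'
end

section
/- Let q be a prime power and suppose a (classical, shared-randomness) strategy wins the CHSH_q game with probability p_win. Then there is a strategy with the same winning probability p_win that is regular: for every input pair (x,y) and every k ∈ 𝔽_q \ {0}, the probability that the outputs satisfy a + b = xy + k equals (1 − p_win)/(q − 1). In particular, conditioning-free: the distribution of the error a + b − xy on 𝔽_q \ {0} is uniform given any (x,y). -/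
open Finset

lemma aux_shift {F : Type*} [Field F] [Fintype F] [DecidableEq F]
    (t : F) (f : F → ℝ) : ∑ γ : F, f (t + γ) = ∑ u : F, f u :=
  Fintype.sum_equiv (Equiv.addLeft t) _ _ (fun _ => rfl)

lemma aux_units {F : Type*} [Field F] [Fintype F] [DecidableEq F]
    (c e : F) (hc : c ≠ 0) :
    ∑ α : Fˣ, ∑ β : Fˣ, (if e = c * ↑α * ↑β then (1:ℝ) else 0)
      = if e = 0 then 0 else (Fintype.card Fˣ : ℝ) := by
  by_cases he : e = 0
  · simp only [he, if_pos rfl]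
    have : ∀ α β : Fˣ, (0:F) ≠ c * ↑α * ↑β := by
      intro α β h
      exact (mul_ne_zero (mul_ne_zero hc α.ne_zero) β.ne_zero) h.symm
    simp [this]
  · rw [if_neg he]
    have hsum : ∀ α : Fˣ, ∑ β : Fˣ, (if e = c * ↑α * ↑β then (1:ℝ) else 0) = 1 := by
      intro α
      set C : Fˣ := Units.mk0 (c * ↑α) (mul_ne_zero hc α.ne_zero) with hC
      set E : Fˣ := Units.mk0 e he with hE
      have : ∀ β : Fˣ, (e = c * ↑α * ↑β) ↔ (β = C⁻¹ * E) := by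
        intro β
        constructor
        · intro h
          have : E = C * β := by ext; rw [hE, hC, Units.val_mul, Units.val_mk0, Units.val_mk0]; exact h
          rw [this]; group
        · intro h
          rw [h]
          have h1 : c * ↑α * ↑(C⁻¹ * E) = e :=
            calc c * ↑α * (↑(C⁻¹ * E) : F) = ↑C * ↑(C⁻¹ * E) := by rw [hC, Units.val_mk0]
              _ = ↑(C * (C⁻¹ * E)) := (Units.val_mul _ _).symm
              _ = ↑E := by rw [mul_inv_cancel_left]
              _ = e := rfl
          exact h1.symm
      simp only [this]
      simp
    simp [hsum]

/-- Regularized Alice response. -/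
def regA {F R : Type*} [Field F] (A : R → F → F) :
    (R × Fˣ × Fˣ × F × F) → F → F :=
  fun t x =>
    (A t.1 ((t.2.1 : F) * x + t.2.2.2.1) - t.2.2.2.2 * (t.2.1 : F) * x
        - t.2.2.2.1 * t.2.2.2.2)
      * ((t.2.1 : F) * (t.2.2.1 : F))⁻¹

/-- Regularized Bob response. -/
def regB {F R : Type*} [Field F] (B : R → F → F) :
    (R × Fˣ × Fˣ × F × F) → F → F :=
  fun t y =>
    (B t.1 ((t.2.2.1 : F) * y + t.2.2.2.2) - (t.2.2.1 : F) * t.2.2.2.1 * y)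
      * ((t.2.1 : F) * (t.2.2.1 : F))⁻¹

lemma reg_cond {F R : Type*} [Field F] (A B : R → F → F)
    (ρ : R) (α β : Fˣ) (γ δ x y k : F) :
    (regA A (ρ, α, β, γ, δ) x + regB B (ρ, α, β, γ, δ) y = x * y + k)
      ↔ (A ρ ((α : F) * x + γ) + B ρ ((β : F) * y + δ)
          - ((α : F) * x + γ) * ((β : F) * y + δ) = k * (α : F) * (β : F)) := by
  have hd : ((α : F) * (β : F)) ≠ 0 := mul_ne_zero α.ne_zero β.ne_zero
  unfold regA regB
  rw [show (A ρ ((α : F) * x + γ) - δ * (α : F) * x - γ * δ) * ((α : F) * (β : F))⁻¹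
        + (B ρ ((β : F) * y + δ) - (β : F) * γ * y) * ((α : F) * (β : F))⁻¹
      = ((A ρ ((α : F) * x + γ) - δ * (α : F) * x - γ * δ)
          + (B ρ ((β : F) * y + δ) - (β : F) * γ * y))
        / ((α : F) * (β : F)) from by rw [div_eq_mul_inv]; ring]
  rw [div_eq_iff hd]
  constructor <;> intro h <;> linear_combination h

lemma key_shift {F R : Type*} [Field F] [Fintype F] [DecidableEq F]
    (A B : R → F → F) (ρ : R) (s t c : F) :
    ∑ γ : F, ∑ δ : F,
        (if A ρ (s + γ) + B ρ (t + δ) - (s + γ) * (t + δ) = c then (1:ℝ) else 0)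
      = ∑ u : F, ∑ v : F, (if A ρ u + B ρ v - u * v = c then (1:ℝ) else 0) := by
  rw [aux_shift s (fun u => ∑ δ : F,
      (if A ρ u + B ρ (t + δ) - u * (t + δ) = c then (1:ℝ) else 0))]
  exact Finset.sum_congr rfl fun u _ =>
    aux_shift t (fun v => (if A ρ u + B ρ v - u * v = c then (1:ℝ) else 0))

/-- Regularization lemma for CHSH_q: any classical shared-randomness strategy
(randomness distribution `r`, response functions `A`, `B`) with winning probability
`p_win` can be replaced by a strategy with the same winning probability which is
regular: on every input pair `(x,y)`, each nonzero error `k` occurs with probability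
exactly `(1 − p_win)/(q − 1)`. -/
theorem stmt12 {F : Type*} [Field F] [Fintype F] [DecidableEq F]
    (q : ℕ) (hq : IsPrimePow q) (hF : Fintype.card F = q)
    {R : Type*} [Fintype R] (r : R → ℝ) (hr0 : ∀ ρ, 0 ≤ r ρ) (hr1 : ∑ ρ, r ρ = 1)
    (A B : R → F → F)
    (pwin : ℝ)
    (hpwin : pwin = ((q : ℝ) ^ 2)⁻¹ *
      ∑ x : F, ∑ y : F, ∑ ρ, r ρ * (if A ρ x + B ρ y = x * y then 1 else 0)) :
    ∃ (n : ℕ) (r' : Fin n → ℝ) (A' B' : Fin n → F → F),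
      (∀ ρ, 0 ≤ r' ρ) ∧ (∑ ρ, r' ρ = 1) ∧
      (((q : ℝ) ^ 2)⁻¹ *
          ∑ x : F, ∑ y : F, ∑ ρ, r' ρ * (if A' ρ x + B' ρ y = x * y then 1 else 0)
        = pwin) ∧
      (∀ x y : F, ∀ k : F, k ≠ 0 →
        ∑ ρ, r' ρ * (if A' ρ x + B' ρ y = x * y + k then 1 else 0)
          = (1 - pwin) / ((q : ℝ) - 1)) := by
  classical
  have hq2 : 2 ≤ q := hq.two_le
  have hqR0 : (0:ℝ) < (q:ℝ) := by exact_mod_cast (by omega : 0 < q)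
  have hqRne : ((q:ℝ)) ≠ 0 := ne_of_gt hqR0
  have hq1R : (0:ℝ) < (q:ℝ) - 1 := by
    have : (1:ℝ) < (q:ℝ) := by exact_mod_cast (by omega : 1 < q)
    linarith
  have hq1Rne : ((q:ℝ) - 1) ≠ 0 := ne_of_gt hq1R
  have hcardF : (Fintype.card F : ℝ) = (q:ℝ) := by exact_mod_cast hF
  have hcardU : (Fintype.card Fˣ : ℝ) = (q:ℝ) - 1 := by
    rw [Fintype.card_units, hF, Nat.cast_sub (by omega), Nat.cast_one]
  set E : Fin (Fintype.card (R × Fˣ × Fˣ × F × F)) ≃ (R × Fˣ × Fˣ × F × F) :=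
    (Fintype.equivFin (R × Fˣ × Fˣ × F × F)).symm with hE
  set w : ℝ := (((q:ℝ) - 1)^2 * (q:ℝ)^2)⁻¹ with hw
  have hw0 : 0 < w := by rw [hw]; positivity
  set N : R → ℝ := fun ρ => ∑ u : F, ∑ v : F,
      (if A ρ u + B ρ v = u * v then (1:ℝ) else 0) with hN
  have hpwin' : pwin = ((q : ℝ) ^ 2)⁻¹ * ∑ ρ, r ρ * N ρ := by
    rw [hpwin]
    congr 1
    calc ∑ x : F, ∑ y : F, ∑ ρ, r ρ * (if A ρ x + B ρ y = x * y then (1:ℝ) else 0)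
        = ∑ x : F, ∑ ρ, ∑ y : F, r ρ * (if A ρ x + B ρ y = x * y then (1:ℝ) else 0) :=
          Finset.sum_congr rfl fun x _ => Finset.sum_comm
      _ = ∑ ρ, ∑ x : F, ∑ y : F, r ρ * (if A ρ x + B ρ y = x * y then (1:ℝ) else 0) :=
          Finset.sum_comm
      _ = ∑ ρ, r ρ * N ρ := by
          refine Finset.sum_congr rfl fun ρ _ => ?_
          rw [hN, Finset.mul_sum]
          exact Finset.sum_congr rfl fun u _ => (Finset.mul_sum _ _ _).symm
  have swap4 : ∀ (f : Fˣ → Fˣ → F → F → ℝ),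
      ∑ α : Fˣ, ∑ β : Fˣ, ∑ u : F, ∑ v : F, f α β u v
        = ∑ u : F, ∑ v : F, ∑ α : Fˣ, ∑ β : Fˣ, f α β u v := by
    intro f
    calc ∑ α : Fˣ, ∑ β : Fˣ, ∑ u : F, ∑ v : F, f α β u v
        = ∑ α : Fˣ, ∑ u : F, ∑ β : Fˣ, ∑ v : F, f α β u v :=
          Finset.sum_congr rfl fun α _ => Finset.sum_comm
      _ = ∑ u : F, ∑ α : Fˣ, ∑ β : Fˣ, ∑ v : F, f α β u v := Finset.sum_comm
      _ = ∑ u : F, ∑ α : Fˣ, ∑ v : F, ∑ β : Fˣ, f α β u v :=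
          Finset.sum_congr rfl fun u _ => Finset.sum_congr rfl fun α _ =>
            Finset.sum_comm
      _ = ∑ u : F, ∑ v : F, ∑ α : Fˣ, ∑ β : Fˣ, f α β u v :=
          Finset.sum_congr rfl fun u _ => Finset.sum_comm
  have hmaster : ∀ (x y k : F),
      (∑ i : Fin (Fintype.card (R × Fˣ × Fˣ × F × F)), (w * r (E i).1) *
          (if regA A (E i) x + regB B (E i) y = x * y + k then (1:ℝ) else 0))
        = w * ∑ ρ, r ρ * ∑ α : Fˣ, ∑ β : Fˣ, ∑ u : F, ∑ v : F,
            (if A ρ u + B ρ v - u * v = k * (α : F) * (β : F) then (1:ℝ) else 0) := by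
    intro x y k
    rw [Equiv.sum_comp E (fun t : R × Fˣ × Fˣ × F × F =>
      (w * r t.1) * (if regA A t x + regB B t y = x * y + k then (1:ℝ) else 0))]
    simp only [Fintype.sum_prod_type]
    simp only [reg_cond A B]
    rw [Finset.mul_sum]
    refine Finset.sum_congr rfl fun ρ _ => ?_
    rw [← mul_assoc, Finset.mul_sum]
    refine Finset.sum_congr rfl fun α _ => ?_
    rw [Finset.mul_sum]
    refine Finset.sum_congr rfl fun β _ => ?_
    rw [← key_shift A B ρ ((α : F) * x) ((β : F) * y) (k * (α : F) * (β : F)),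
      Finset.mul_sum]
    refine Finset.sum_congr rfl fun γ _ => ?_
    rw [Finset.mul_sum]
  refine ⟨Fintype.card (R × Fˣ × Fˣ × F × F), fun i => w * r (E i).1, fun i => regA A (E i), fun i => regB B (E i),
    ?_, ?_, ?_, ?_⟩
  · intro i
    exact mul_nonneg (le_of_lt hw0) (hr0 _)
  · -- total mass 1
    rw [Equiv.sum_comp E (fun t : R × Fˣ × Fˣ × F × F => w * r t.1)]
    simp only [Fintype.sum_prod_type]
    simp only [Finset.sum_const, Finset.card_univ, nsmul_eq_mul]
    have : ∀ ρ, (Fintype.card Fˣ : ℝ) * ((Fintype.card Fˣ : ℝ) *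
        ((Fintype.card F : ℝ) * ((Fintype.card F : ℝ) * (w * r ρ)))) = r ρ := by
      intro ρ
      rw [hcardU, hcardF, hw]
      field_simp
    simp only [this]
    exact hr1
  · -- winning probability preserved
    have hzero : ∀ ρ, (∑ α : Fˣ, ∑ β : Fˣ, ∑ u : F, ∑ v : F,
        (if A ρ u + B ρ v - u * v = (0:F) * (α : F) * (β : F) then (1:ℝ) else 0))
        = ((q:ℝ) - 1)^2 * N ρ := by
      intro ρ
      simp only [zero_mul, sub_eq_zero]
      simp only [Finset.sum_const, Finset.card_univ, nsmul_eq_mul]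
      simp only [hN, hcardU]
      ring
    have hin : ∀ x y : F, (∑ i : Fin (Fintype.card (R × Fˣ × Fˣ × F × F)),
        (w * r (E i).1) *
          (if regA A (E i) x + regB B (E i) y = x * y then (1:ℝ) else 0))
        = w * (((q:ℝ) - 1)^2 * ∑ ρ, r ρ * N ρ) := by
      intro x y
      have h0 := hmaster x y 0
      simp only [add_zero] at h0
      rw [h0]
      congr 1
      calc ∑ ρ, r ρ * ∑ α : Fˣ, ∑ β : Fˣ, ∑ u : F, ∑ v : F,
            (if A ρ u + B ρ v - u * v = (0:F) * (α : F) * (β : F) then (1:ℝ) else 0)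
          = ∑ ρ, ((q:ℝ) - 1)^2 * (r ρ * N ρ) := by
            refine Finset.sum_congr rfl fun ρ _ => ?_
            rw [hzero ρ]; ring
        _ = ((q:ℝ) - 1)^2 * ∑ ρ, r ρ * N ρ := (Finset.mul_sum _ _ _).symm
    calc ((q : ℝ) ^ 2)⁻¹ * ∑ x : F, ∑ y : F,
          ∑ i, (w * r (E i).1) *
            (if regA A (E i) x + regB B (E i) y = x * y then (1:ℝ) else 0)
        = ((q : ℝ) ^ 2)⁻¹ * ∑ x : F, ∑ y : F,
            (w * (((q:ℝ) - 1)^2 * ∑ ρ, r ρ * N ρ)) := by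
          rw [Finset.sum_congr rfl fun x _ => Finset.sum_congr rfl fun y _ => hin x y]
      _ = pwin := by
          simp only [Finset.sum_const, Finset.card_univ, nsmul_eq_mul, hcardF]
          rw [hpwin', hw]
          field_simp
  · -- regularity
    intro x y k hk
    have hinner : ∀ ρ, (∑ α : Fˣ, ∑ β : Fˣ, ∑ u : F, ∑ v : F,
        (if A ρ u + B ρ v - u * v = k * (α : F) * (β : F) then (1:ℝ) else 0))
        = ((q:ℝ) - 1) * ((q:ℝ)^2 - N ρ) := by
      intro ρ
      rw [swap4]
      calc ∑ u : F, ∑ v : F, ∑ α : Fˣ, ∑ β : Fˣ,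
            (if A ρ u + B ρ v - u * v = k * (α : F) * (β : F) then (1:ℝ) else 0)
          = ∑ u : F, ∑ v : F,
              (((q:ℝ) - 1) - ((q:ℝ) - 1) *
                (if A ρ u + B ρ v = u * v then (1:ℝ) else 0)) := by
            refine Finset.sum_congr rfl fun u _ => Finset.sum_congr rfl fun v _ => ?_
            rw [aux_units k _ hk, hcardU]
            by_cases h : A ρ u + B ρ v = u * v
            · rw [if_pos ((sub_eq_zero).mpr h), if_pos h]; ring
            · rw [if_neg (fun hc => h ((sub_eq_zero).mp hc)), if_neg h]; ring
        _ = ((q:ℝ) - 1) * ((q:ℝ)^2 - N ρ) := by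
            simp only [Finset.sum_sub_distrib, Finset.sum_const, Finset.card_univ,
              nsmul_eq_mul, hcardF, ← Finset.mul_sum]
            rw [hN]
            ring
    rw [hmaster x y k]
    calc w * ∑ ρ, r ρ * ∑ α : Fˣ, ∑ β : Fˣ, ∑ u : F, ∑ v : F,
          (if A ρ u + B ρ v - u * v = k * (α : F) * (β : F) then (1:ℝ) else 0)
        = w * ∑ ρ, (((q:ℝ) - 1) * (q:ℝ)^2 * r ρ - ((q:ℝ) - 1) * (r ρ * N ρ)) := by
          congr 1
          refine Finset.sum_congr rfl fun ρ _ => ?_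
          rw [hinner ρ]; ring
      _ = (1 - pwin) / ((q : ℝ) - 1) := by
          rw [Finset.sum_sub_distrib, ← Finset.mul_sum, ← Finset.mul_sum, hr1,
            hpwin', hw]
          field_simp
end

section
/- For any real t with 0 ≤ t ≤ 1 and integer q ≥ 2 with t ≤ 1/(2q): (1/q)(1 + (q−1)t)·log₂(1 + (q−1)t) + ((q−1)/q)(1 − t)·log₂(1 − t) ≥ c·t² / q for some absolute constant c > 0 (e.g. c = 1/8 works). -/
open Real

lemma aux_deriv (x : ℝ) (hx : x < 1) :
    HasDerivAt (fun t : ℝ => (1 - t) * Real.log (1 - t) + t - t ^ 2 / 2)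
      (-Real.log (1 - x) - x) x := by
  have h1 : HasDerivAt (fun t : ℝ => 1 - t) (-1) x := by
    simpa using (hasDerivAt_id x).const_sub 1
  have hpos : 0 < 1 - x := by linarith
  have h2 : HasDerivAt (fun t : ℝ => Real.log (1 - t)) (-(1 - x)⁻¹) x := by
    have := (Real.hasDerivAt_log (ne_of_gt hpos)).comp x h1
    exact this.congr_deriv (by ring)
  have h3 : HasDerivAt (fun t : ℝ => (1 - t) * Real.log (1 - t))
      ((-1) * Real.log (1 - x) + (1 - x) * (-(1 - x)⁻¹)) x := h1.mul h2
  have h4 : HasDerivAt (fun t : ℝ => t ^ 2 / 2) x x := by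
    simpa using (hasDerivAt_pow 2 x).div_const 2
  have := (h3.add (hasDerivAt_id x)).sub h4
  refine this.congr_deriv ?_
  have hm : (1 - x) * (1 - x)⁻¹ = 1 := mul_inv_cancel₀ (ne_of_gt hpos)
  linear_combination -hm

lemma aux (t : ℝ) (h0 : 0 ≤ t) (h1 : t ≤ 1 / 2) :
    -t + t ^ 2 / 2 ≤ (1 - t) * Real.log (1 - t) := by
  set f : ℝ → ℝ := fun t => (1 - t) * Real.log (1 - t) + t - t ^ 2 / 2 with hf
  have hmono : MonotoneOn f (Set.Icc 0 (1/2)) := by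
    apply monotoneOn_of_deriv_nonneg (convex_Icc 0 (1/2))
    · apply ContinuousOn.sub
      apply ContinuousOn.add
      · apply ContinuousOn.mul (by fun_prop)
        apply ContinuousOn.log (by fun_prop)
        intro x hx
        simp only [Set.mem_Icc] at hx
        intro h; linarith [hx.2]
      · fun_prop
      · fun_prop
    · intro x hx
      rw [interior_Icc, Set.mem_Ioo] at hx
      exact (aux_deriv x (by linarith [hx.2])).differentiableAt.differentiableWithinAt
    · intro x hx
      rw [interior_Icc, Set.mem_Ioo] at hx
      rw [(aux_deriv x (by linarith [hx.2])).deriv]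
      have := Real.log_le_sub_one_of_pos (show (0:ℝ) < 1 - x by linarith [hx.2])
      linarith
  have h := hmono (Set.mem_Icc.mpr ⟨le_refl 0, by norm_num⟩)
    (Set.mem_Icc.mpr ⟨h0, h1⟩) h0
  simp only [hf] at h
  norm_num at h
  linarith

lemma xlogx_ge (x : ℝ) (hx : 0 < x) : x - 1 ≤ x * Real.log x := by
  have := Real.log_le_sub_one_of_pos (show (0:ℝ) < 1/x by positivity)
  rw [Real.log_div one_ne_zero (ne_of_gt hx), Real.log_one] at this
  have hinv : x * (1 / x) = 1 := by field_simp
  nlinarith [mul_le_mul_of_nonneg_left this hx.le]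

/-- Quantitative lower bound on the mutual-information expression: there is an
absolute constant `c > 0` such that for all integers `q ≥ 2` and reals `0 ≤ t ≤ 1`
with `t ≤ 1/(2q)`,
`(1/q)(1+(q−1)t)log₂(1+(q−1)t) + ((q−1)/q)(1−t)log₂(1−t) ≥ c t²/q`. -/
theorem stmt18 :
    ∃ c : ℝ, 0 < c ∧ ∀ (q : ℕ) (t : ℝ), 2 ≤ q → 0 ≤ t → t ≤ 1 → t ≤ 1 / (2 * q) →
      c * t ^ 2 / q ≤
        1 / q * (1 + ((q : ℝ) - 1) * t) * Real.logb 2 (1 + ((q : ℝ) - 1) * t) +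
          ((q : ℝ) - 1) / q * (1 - t) * Real.logb 2 (1 - t) := by
  refine ⟨1/2, by norm_num, fun q t hq h0 h1 h2 => ?_⟩
  have hq2 : (2:ℝ) ≤ q := by exact_mod_cast hq
  have hqpos : (0:ℝ) < q := by linarith
  have ht4 : t ≤ 1/4 := le_trans h2 (by rw [div_le_div_iff₀ (by positivity) (by norm_num)]; linarith)
  set x1 : ℝ := 1 + ((q:ℝ) - 1) * t with hx1
  have hx1pos : 0 < x1 := by nlinarith
  have hx2pos : 0 < 1 - t := by linarith
  -- natural-log bounds
  have hb1 : ((q:ℝ) - 1) * t ≤ x1 * Real.log x1 := by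
    have := xlogx_ge x1 hx1pos; linarith
  have hb2 : -t + t ^ 2 / 2 ≤ (1 - t) * Real.log (1 - t) := aux t h0 (by linarith)
  -- combine with weights
  have hsum : t ^ 2 / 4 ≤
      1 / q * (x1 * Real.log x1) + ((q:ℝ) - 1) / q * ((1 - t) * Real.log (1 - t)) := by
    have w1 : (0:ℝ) < 1 / q := by positivity
    have w2 : (0:ℝ) ≤ ((q:ℝ) - 1) / q := div_nonneg (by linarith) hqpos.le
    have c1 : 1 / q * (((q:ℝ) - 1) * t) ≤ 1 / q * (x1 * Real.log x1) :=
      mul_le_mul_of_nonneg_left hb1 (le_of_lt w1)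
    have c2 : ((q:ℝ) - 1) / q * (-t + t ^ 2 / 2) ≤
        ((q:ℝ) - 1) / q * ((1 - t) * Real.log (1 - t)) :=
      mul_le_mul_of_nonneg_left hb2 w2
    have key : 1 / q * (((q:ℝ) - 1) * t) + ((q:ℝ) - 1) / q * (-t + t ^ 2 / 2)
        = ((q:ℝ) - 1) / q * (t ^ 2 / 2) := by field_simp; ring
    have hfrac : t ^ 2 / 4 ≤ ((q:ℝ) - 1) / q * (t ^ 2 / 2) := by
      have : (1:ℝ)/2 ≤ ((q:ℝ) - 1) / q := by
        rw [le_div_iff₀ hqpos]; linarith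
      nlinarith [sq_nonneg t]
    linarith
  -- convert to logb
  have hlog2 : (0:ℝ) < Real.log 2 := Real.log_pos (by norm_num)
  have hlog2le : Real.log 2 ≤ 1 := by
    have := Real.log_le_sub_one_of_pos (show (0:ℝ) < 2 by norm_num); linarith
  rw [Real.logb, Real.logb]
  have hnatnn : 0 ≤ 1 / q * (x1 * Real.log x1) + ((q:ℝ) - 1) / q * ((1 - t) * Real.log (1 - t)) := by
    nlinarith [sq_nonneg t]
  have expand : 1 / ↑q * x1 * (Real.log x1 / Real.log 2) +
      (↑q - 1) / ↑q * (1 - t) * (Real.log (1 - t) / Real.log 2)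
      = (1 / q * (x1 * Real.log x1) + ((q:ℝ) - 1) / q * ((1 - t) * Real.log (1 - t))) / Real.log 2 := by
    field_simp
  rw [expand]
  have hdiv : 1 / q * (x1 * Real.log x1) + ((q:ℝ) - 1) / q * ((1 - t) * Real.log (1 - t)) ≤
      (1 / q * (x1 * Real.log x1) + ((q:ℝ) - 1) / q * ((1 - t) * Real.log (1 - t))) / Real.log 2 := by
    rw [le_div_iff₀ hlog2]
    nlinarith
  have hfinal : 1/2 * t ^ 2 / q ≤ t ^ 2 / 4 := by
    rw [div_le_div_iff₀ hqpos (by norm_num)]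
    nlinarith [sq_nonneg t]
  linarith
end
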